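/- Fix x ≥ 1 and let k(u) = −1 + (1+u)(1+u + x(1+u+x)·log(1+1/u)) / (u(1+u) + (u+x+1)(x+1)) for u > 0. Then k is strictly decreasing on (0, x], i.e. k'(u) < 0 for all u ∈ (0, x]. -/

import Mathlib

noncomputable def k (x u : ℝ) : ℝ :=
  -1 + (1+u)*(1+u + x*(1+u+x) * Real.log (1 + 1/u)) / (u*(1+u) + (u+x+1)*(x+1))

lemma kDpos (x u : ℝ) (hx : 1 ≤ x) (hu : 0 < u) :
    0 < u*(1+u) + (u+x+1)*(x+1) := by nlinarith

lemma kderiv (x u : ℝ) (hx : 1 ≤ x) (hu : 0 < u) :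
    HasDerivAt (fun u => k x u)
      (((2*(1+u) + x*(2+2*u+x)*Real.log (1+1/u) - x*(1+u+x)/u) *
          (u*(1+u) + (u+x+1)*(x+1)) -
        ((1+u)*(1+u) + x*(1+u)*(1+u+x)*Real.log (1+1/u)) * (2*u+2+x)) /
        (u*(1+u) + (u+x+1)*(x+1))^2) u := by
  have hu0 : u ≠ 0 := hu.ne'
  have h1u : 0 < 1 + 1/u := by positivity
  have hD : 0 < u*(1+u) + (u+x+1)*(x+1) := kDpos x u hx hu
  have hL : HasDerivAt (fun u : ℝ => Real.log (1+1/u)) ((-(1/(u^2)))/(1+1/u)) u := by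
    have hinner : HasDerivAt (fun u : ℝ => 1 + 1/u) (-(1/(u^2))) u := by
      simpa [one_div] using (hasDerivAt_inv hu0).const_add (1:ℝ)
    exact hinner.log h1u.ne'
  have hNinner : HasDerivAt (fun u : ℝ => 1+u + x*(1+u+x)*Real.log (1+1/u))
      (1 + (x*1*Real.log (1+1/u) + x*(1+u+x)*((-(1/(u^2)))/(1+1/u)))) u := by
    have h1 : HasDerivAt (fun u : ℝ => 1+u) 1 u := by
      exact (hasDerivAt_id' u).const_add (1:ℝ)
    have h2 : HasDerivAt (fun u : ℝ => x*(1+u+x)) (x*1) u := by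
      have : HasDerivAt (fun u : ℝ => 1+u+x) 1 u := by
        exact ((hasDerivAt_id' u).const_add (1:ℝ)).add_const x
      exact this.const_mul x
    exact h1.add (h2.mul hL)
  have hN : HasDerivAt (fun u : ℝ => (1+u)*(1+u + x*(1+u+x)*Real.log (1+1/u)))
      (1*(1+u + x*(1+u+x)*Real.log (1+1/u)) +
        (1+u)*(1 + (x*1*Real.log (1+1/u) + x*(1+u+x)*((-(1/(u^2)))/(1+1/u))))) u := by
    have h1 : HasDerivAt (fun u : ℝ => 1+u) 1 u := by
      exact (hasDerivAt_id' u).const_add (1:ℝ)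
    exact h1.mul hNinner
  have hDen : HasDerivAt (fun u : ℝ => u*(1+u) + (u+x+1)*(x+1)) (2*u+2+x) u := by
    have h1 : HasDerivAt (fun u : ℝ => u*(1+u)) (1*(1+u)+u*1) u := by
      have : HasDerivAt (fun u : ℝ => 1+u) 1 u := by
        exact (hasDerivAt_id' u).const_add (1:ℝ)
      exact (hasDerivAt_id u).mul this
    have h2 : HasDerivAt (fun u : ℝ => (u+x+1)*(x+1)) (1*(x+1)) u := by
      have : HasDerivAt (fun u : ℝ => u+x+1) 1 u := by
        exact ((hasDerivAt_id' u).add_const x).add_const (1:ℝ)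
      exact this.mul_const (x+1)
    have := h1.add h2
    exact this.congr_deriv (by ring)
  have hk : HasDerivAt (fun u => k x u)
      (0 + ((1*(1+u + x*(1+u+x)*Real.log (1+1/u)) +
        (1+u)*(1 + (x*1*Real.log (1+1/u) + x*(1+u+x)*((-(1/(u^2)))/(1+1/u))))) *
        (u*(1+u) + (u+x+1)*(x+1)) -
        (1+u)*(1+u + x*(1+u+x)*Real.log (1+1/u)) * (2*u+2+x)) /
        (u*(1+u) + (u+x+1)*(x+1))^2) u := by
    exact (hasDerivAt_const u (-1:ℝ)).add (hN.div hDen hD.ne')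
  convert hk using 1
  have hup : (0:ℝ) < u^2 := by positivity
  field_simp
  ring

theorem stmt10 : ∀ x : ℝ, 1 ≤ x →
    StrictAntiOn (fun u => k x u) (Set.Ioc 0 x) ∧
    ∀ u ∈ Set.Ioc (0:ℝ) x, deriv (fun u => k x u) u < 0 := by
  intro x hx
  have key : ∀ u ∈ Set.Ioc (0:ℝ) x, deriv (fun u => k x u) u < 0 := by
    rintro u ⟨hu, hux⟩
    rw [(kderiv x u hx hu).deriv]
    have hD : 0 < u*(1+u) + (u+x+1)*(x+1) := kDpos x u hx hu
    apply div_neg_of_neg_of_pos _ (by positivity)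
    set L := Real.log (1+1/u) with hLdef
    have hLle : u * L ≤ 1 := by
      have h1 : L ≤ 1/u := by
        have h := Real.log_le_sub_one_of_pos (x := 1+1/u) (by positivity)
        rw [hLdef]; linarith
      calc u * L ≤ u * (1/u) := by nlinarith
        _ = 1 := by field_simp
    -- multiply the numerator by u
    have hmul : u * ((2*(1+u) + x*(2+2*u+x)*L - x*(1+u+x)/u) *
          (u*(1+u) + (u+x+1)*(x+1)) -
        ((1+u)*(1+u) + x*(1+u)*(1+u+x)*L) * (2*u+2+x))
        = x*(u*(1+u)*(u+2*x+3) - (1+u+x)*(u*(1+u)+(u+x+1)*(x+1))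
            + x*(1+x)*(2+2*u+x)*(u*L)) := by
      field_simp
      ring
    have hneg : u * ((2*(1+u) + x*(2+2*u+x)*L - x*(1+u+x)/u) *
          (u*(1+u) + (u+x+1)*(x+1)) -
        ((1+u)*(1+u) + x*(1+u)*(1+u+x)*L) * (2*u+2+x)) < 0 := by
      rw [hmul]
      have hE : u*(1+u)*(u+2*x+3) - (1+u+x)*(u*(1+u)+(u+x+1)*(x+1))
            + x*(1+x)*(2+2*u+x)*(u*L) ≤ u^2 - u*x - (1+x) := by
        nlinarith [mul_nonneg (mul_nonneg (by positivity : (0:ℝ) ≤ x*(1+x)) (by nlinarith : (0:ℝ) ≤ 2+2*u+x)) (sub_nonneg.2 hLle)]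
      nlinarith [mul_nonneg hu.le (sub_nonneg.2 hux)]
    nlinarith [hneg, hu]
  refine ⟨?_, key⟩
  have hconv : Convex ℝ (Set.Ioc (0:ℝ) x) := convex_Ioc 0 x
  apply StrictAntiOn.mono (s := Set.Ioc 0 x) ?_ le_rfl
  apply strictAntiOn_of_deriv_neg hconv
  · intro u hu
    exact (kderiv x u hx hu.1).differentiableAt.continuousAt.continuousWithinAt
  · intro u hu
    rw [interior_Ioc] at hu
    exact key u ⟨hu.1, hu.2.le⟩
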